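/- arXiv:1612.09496 — 2 statements merged into one kernel-verified Lean document; each statement's English description precedes it below -/
import Mathlib

section
/- Let E_s, E_r, B_s : [0,∞) → [0,∞) be nondecreasing with E_r bounded on every compact interval, and let r_sr, r_rd be rate functions with lim_{p→∞} r_rd(p)/p = 0. For T > 0 let D(T) denote the two-hop maximum throughput over the deadline [0,T]. Then D is continuous on (0,∞). -/
open MeasureTheory Set Filter intervalIntegral

noncomputable section

/-- A rate function: continuous, strictly increasing, concave on `[0,∞)`,
vanishing at `0` and tending to `∞`. -/
def IsRateFunction (r : ℝ → ℝ) : Prop :=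
  ContinuousOn r (Set.Ici 0) ∧ StrictMonoOn r (Set.Ici 0) ∧
    ConcaveOn ℝ (Set.Ici 0) r ∧ r 0 = 0 ∧
    Filter.Tendsto r Filter.atTop Filter.atTop

/-- Two-hop feasibility of a pair of power policies `(psr, prd)` on `[0,T]`. -/
def TwoHopFeasible (T : ℝ) (Es Er Bs rsr rrd psr prd : ℝ → ℝ) : Prop :=
  IntervalIntegrable psr MeasureTheory.volume 0 T ∧
  IntervalIntegrable prd MeasureTheory.volume 0 T ∧
  IntervalIntegrable (fun s => rsr (psr s)) MeasureTheory.volume 0 T ∧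
  IntervalIntegrable (fun s => rrd (prd s)) MeasureTheory.volume 0 T ∧
  (∀ t ∈ Set.Icc (0:ℝ) T, 0 ≤ psr t ∧ 0 ≤ prd t) ∧
  (∀ t ∈ Set.Icc (0:ℝ) T, (∫ s in (0:ℝ)..t, psr s) ≤ Es t) ∧
  (∀ t ∈ Set.Icc (0:ℝ) T, (∫ s in (0:ℝ)..t, prd s) ≤ Er t) ∧
  (∀ t ∈ Set.Icc (0:ℝ) T, (∫ s in (0:ℝ)..t, rsr (psr s)) ≤ Bs t) ∧
  (∀ t ∈ Set.Icc (0:ℝ) T,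
    (∫ s in (0:ℝ)..t, rrd (prd s)) ≤ ∫ s in (0:ℝ)..t, rsr (psr s))

/-- The two-hop maximum throughput by deadline `T`. -/
def MaxThroughput (Es Er Bs rsr rrd : ℝ → ℝ) (T : ℝ) : ℝ :=
  sSup {x : ℝ | ∃ psr prd : ℝ → ℝ,
    TwoHopFeasible T Es Er Bs rsr rrd psr prd ∧
    x = ∫ t in (0:ℝ)..T, rrd (prd t)}

/-! ### Auxiliary lemmas -/

lemma rate_nonneg {r : ℝ → ℝ} (hr : IsRateFunction r) {p : ℝ} (hp : 0 ≤ p) : 0 ≤ r p := by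
  obtain ⟨hc, hm, hcc, h0, ht⟩ := hr
  rcases eq_or_lt_of_le hp with h | h
  · simp [← h, h0]
  · have := hm (Set.mem_Ici.mpr le_rfl) (Set.mem_Ici.mpr hp) h
    linarith

lemma rate_le_affine {r : ℝ → ℝ} (hr : IsRateFunction r) {K p : ℝ} (hK : 0 < K) (hp : 0 ≤ p) :
    r p ≤ r K + r K / K * p := by
  have hK0 : 0 ≤ r K := rate_nonneg hr hK.le
  obtain ⟨hc, hm, hcc, h0, ht⟩ := hr
  rcases le_or_gt p K with h | h
  · have h1 : r p ≤ r K := hm.monotoneOn (Set.mem_Ici.mpr hp) (Set.mem_Ici.mpr hK.le) h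
    have h2 : 0 ≤ r K / K * p := mul_nonneg (div_nonneg hK0 hK.le) hp
    linarith
  · have hp0 : 0 < p := hK.trans h
    have ha : (0:ℝ) ≤ K / p := by positivity
    have hb : (0:ℝ) ≤ 1 - K / p := by
      have : K / p ≤ 1 := by rw [div_le_one hp0]; exact h.le
      linarith
    have hab : K / p + (1 - K / p) = 1 := by ring
    have hcomb := hcc.2 (Set.mem_Ici.mpr hp0.le) (Set.mem_Ici.mpr le_rfl) ha hb hab
    have hxy : (K / p) • p + (1 - K / p) • (0:ℝ) = K := by simp only [smul_eq_mul, mul_zero, add_zero]; field_simp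
    rw [hxy] at hcomb
    simp only [smul_eq_mul, h0, mul_zero, add_zero] at hcomb
    have : r p ≤ r K / K * p := by
      rw [div_mul_eq_mul_div, le_div_iff₀ hK]
      calc r p * K = (K / p * r p) * p := by field_simp
        _ ≤ r K * p := mul_le_mul_of_nonneg_right hcomb hp0.le
    nlinarith

/-- The feasible-throughput set. -/
def FS (Es Er Bs rsr rrd : ℝ → ℝ) (T : ℝ) : Set ℝ :=
  {x : ℝ | ∃ psr prd : ℝ → ℝ,
    TwoHopFeasible T Es Er Bs rsr rrd psr prd ∧
    x = ∫ t in (0:ℝ)..T, rrd (prd t)}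

lemma maxThroughput_eq (Es Er Bs rsr rrd : ℝ → ℝ) (T : ℝ) :
    MaxThroughput Es Er Bs rsr rrd T = sSup (FS Es Er Bs rsr rrd T) := rfl

section Aux

variable {Es Er Bs rsr rrd : ℝ → ℝ}

lemma zero_mem_FS (hEs : ∀ t : ℝ, 0 ≤ t → 0 ≤ Es t) (hEr : ∀ t : ℝ, 0 ≤ t → 0 ≤ Er t)
    (hBs : ∀ t : ℝ, 0 ≤ t → 0 ≤ Bs t) (hrsr0 : rsr 0 = 0) (hrrd0 : rrd 0 = 0) {T : ℝ} :
    (0:ℝ) ∈ FS Es Er Bs rsr rrd T := by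
  refine ⟨fun _ => 0, fun _ => 0, ⟨intervalIntegrable_const, intervalIntegrable_const,
    by simpa [hrsr0] using
      (intervalIntegrable_const : IntervalIntegrable (fun _ => (0:ℝ)) volume 0 T),
    by simpa [hrrd0] using
      (intervalIntegrable_const : IntervalIntegrable (fun _ => (0:ℝ)) volume 0 T),
    fun t ht => ⟨le_rfl, le_rfl⟩, ?_, ?_, ?_, ?_⟩, by simp [hrrd0]⟩
  · intro t ht; simpa using hEs t ht.1
  · intro t ht; simpa using hEr t ht.1
  · intro t ht; simpa [hrsr0] using hBs t ht.1
  · intro t ht; simp [hrsr0, hrrd0]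

lemma bddAbove_FS {T : ℝ} (hT : 0 ≤ T) : BddAbove (FS Es Er Bs rsr rrd T) := by
  refine ⟨Bs T, fun x hx => ?_⟩
  obtain ⟨psr, prd, hf, hx⟩ := hx
  have hTmem : T ∈ Set.Icc (0:ℝ) T := ⟨hT, le_rfl⟩
  calc x = ∫ t in (0:ℝ)..T, rrd (prd t) := hx
    _ ≤ ∫ s in (0:ℝ)..T, rsr (psr s) := hf.2.2.2.2.2.2.2.2 T hTmem
    _ ≤ Bs T := hf.2.2.2.2.2.2.2.1 T hTmem

lemma feasible_restrict {T T' : ℝ} (hT : 0 ≤ T) (hTT' : T ≤ T') {psr prd : ℝ → ℝ}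
    (h : TwoHopFeasible T' Es Er Bs rsr rrd psr prd) :
    TwoHopFeasible T Es Er Bs rsr rrd psr prd := by
  have hsub : Set.uIcc (0:ℝ) T ⊆ Set.uIcc (0:ℝ) T' := by
    rw [Set.uIcc_of_le hT, Set.uIcc_of_le (hT.trans hTT')]
    exact Set.Icc_subset_Icc_right hTT'
  have hIcc : Set.Icc (0:ℝ) T ⊆ Set.Icc (0:ℝ) T' := Set.Icc_subset_Icc_right hTT'
  exact ⟨h.1.mono_set hsub, h.2.1.mono_set hsub, h.2.2.1.mono_set hsub, h.2.2.2.1.mono_set hsub,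
    fun t ht => h.2.2.2.2.1 t (hIcc ht), fun t ht => h.2.2.2.2.2.1 t (hIcc ht),
    fun t ht => h.2.2.2.2.2.2.1 t (hIcc ht), fun t ht => h.2.2.2.2.2.2.2.1 t (hIcc ht),
    fun t ht => h.2.2.2.2.2.2.2.2 t (hIcc ht)⟩

end Aux

lemma ext_intervalIntegrable {f : ℝ → ℝ} {T T' : ℝ} (hT : 0 ≤ T) (hTT' : T ≤ T')
    (hf : IntervalIntegrable f volume 0 T) :
    IntervalIntegrable (fun s => if s ≤ T then f s else 0) volume 0 T' := by
  have h1 : IntervalIntegrable (fun s => if s ≤ T then f s else 0) volume 0 T := by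
    refine hf.congr ?_
    rw [uIoc_of_le hT]
    intro s hs
    simp [hs.2]
  have h2 : IntervalIntegrable (fun s => if s ≤ T then f s else 0) volume T T' := by
    refine (_root_.intervalIntegrable_const (c := (0:ℝ))).congr ?_
    rw [uIoc_of_le hTT']
    intro s hs
    simp [not_le.mpr hs.1]
  exact h1.trans h2

lemma ext_integral_le {f : ℝ → ℝ} {T t : ℝ} (hT : 0 ≤ T) (ht : t ≤ T) :
    (∫ s in (0:ℝ)..t, if s ≤ T then f s else 0) = ∫ s in (0:ℝ)..t, f s := by
  refine integral_congr fun s hs => ?_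
  have hs' : s ≤ T := by
    rcases le_total 0 t with h | h
    · rw [uIcc_of_le h] at hs; exact hs.2.trans ht
    · rw [uIcc_of_ge h] at hs; exact hs.2.trans hT
  simp [hs']

lemma ext_integral_gt {f : ℝ → ℝ} {T t : ℝ} (hT : 0 ≤ T) (htT : T ≤ t)
    (hf : IntervalIntegrable f volume 0 T) :
    (∫ s in (0:ℝ)..t, if s ≤ T then f s else 0) = ∫ s in (0:ℝ)..T, f s := by
  have h1 : IntervalIntegrable (fun s => if s ≤ T then f s else 0) volume 0 T := by
    refine hf.congr ?_
    rw [uIoc_of_le hT]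
    intro s hs
    simp [hs.2]
  have h2 : IntervalIntegrable (fun s => if s ≤ T then f s else 0) volume T t := by
    refine (_root_.intervalIntegrable_const (c := (0:ℝ))).congr ?_
    rw [uIoc_of_le htT]
    intro s hs
    simp [not_le.mpr hs.1]
  have hsplit := integral_add_adjacent_intervals h1 h2
  have hzero : (∫ s in T..t, if s ≤ T then f s else 0) = ∫ s in T..t, (0:ℝ) := by
    refine integral_congr_ae ?_
    filter_upwards with s hs
    rw [uIoc_of_le htT] at hs
    simp [not_le.mpr hs.1]
  rw [hzero] at hsplit
  simp only [intervalIntegral.integral_zero, add_zero] at hsplit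
  rw [← hsplit, ext_integral_le hT le_rfl]

section Main

variable {Es Er Bs rsr rrd : ℝ → ℝ}

lemma FS_subset (hEs_mono : MonotoneOn Es (Set.Ici 0)) (hEr_mono : MonotoneOn Er (Set.Ici 0))
    (hBs_mono : MonotoneOn Bs (Set.Ici 0)) (hrsr0 : rsr 0 = 0) (hrrd0 : rrd 0 = 0)
    {T T' : ℝ} (hT : 0 ≤ T) (hTT' : T ≤ T') :
    FS Es Er Bs rsr rrd T ⊆ FS Es Er Bs rsr rrd T' := by
  rintro x ⟨psr, prd, hf, hx⟩
  set psr' : ℝ → ℝ := fun s => if s ≤ T then psr s else 0 with hpsr'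
  set prd' : ℝ → ℝ := fun s => if s ≤ T then prd s else 0 with hprd'
  have hcomp_sr : (fun s => rsr (psr' s)) = (fun s => if s ≤ T then rsr (psr s) else 0) := by
    funext s; by_cases h : s ≤ T <;> simp [psr', h, hrsr0]
  have hcomp_rd : (fun s => rrd (prd' s)) = (fun s => if s ≤ T then rrd (prd s) else 0) := by
    funext s; by_cases h : s ≤ T <;> simp [prd', h, hrrd0]
  refine ⟨psr', prd', ⟨ext_intervalIntegrable hT hTT' hf.1,
    ext_intervalIntegrable hT hTT' hf.2.1,
    hcomp_sr ▸ ext_intervalIntegrable hT hTT' hf.2.2.1,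
    hcomp_rd ▸ ext_intervalIntegrable hT hTT' hf.2.2.2.1, ?_, ?_, ?_, ?_, ?_⟩, ?_⟩
  · intro t ht
    by_cases h : t ≤ T
    · have := hf.2.2.2.2.1 t ⟨ht.1, h⟩
      simpa [psr', prd', h] using this
    · simp [psr', prd', h]
  · intro t ht
    rcases le_or_gt t T with h | h
    · rw [show (∫ s in (0:ℝ)..t, psr' s) = ∫ s in (0:ℝ)..t, psr s from ext_integral_le hT h]
      exact hf.2.2.2.2.2.1 t ⟨ht.1, h⟩
    · rw [show (∫ s in (0:ℝ)..t, psr' s) = ∫ s in (0:ℝ)..T, psr s from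
        ext_integral_gt hT h.le hf.1]
      exact (hf.2.2.2.2.2.1 T ⟨hT, le_rfl⟩).trans
        (hEs_mono (Set.mem_Ici.mpr hT) (Set.mem_Ici.mpr ht.1) h.le)
  · intro t ht
    rcases le_or_gt t T with h | h
    · rw [show (∫ s in (0:ℝ)..t, prd' s) = ∫ s in (0:ℝ)..t, prd s from ext_integral_le hT h]
      exact hf.2.2.2.2.2.2.1 t ⟨ht.1, h⟩
    · rw [show (∫ s in (0:ℝ)..t, prd' s) = ∫ s in (0:ℝ)..T, prd s from
        ext_integral_gt hT h.le hf.2.1]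
      exact (hf.2.2.2.2.2.2.1 T ⟨hT, le_rfl⟩).trans
        (hEr_mono (Set.mem_Ici.mpr hT) (Set.mem_Ici.mpr ht.1) h.le)
  · intro t ht
    rw [hcomp_sr]
    rcases le_or_gt t T with h | h
    · rw [ext_integral_le hT h]
      exact hf.2.2.2.2.2.2.2.1 t ⟨ht.1, h⟩
    · rw [ext_integral_gt hT h.le hf.2.2.1]
      exact (hf.2.2.2.2.2.2.2.1 T ⟨hT, le_rfl⟩).trans
        (hBs_mono (Set.mem_Ici.mpr hT) (Set.mem_Ici.mpr ht.1) h.le)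
  · intro t ht
    rw [hcomp_sr, hcomp_rd]
    rcases le_or_gt t T with h | h
    · rw [ext_integral_le hT h, ext_integral_le hT h]
      exact hf.2.2.2.2.2.2.2.2 t ⟨ht.1, h⟩
    · rw [ext_integral_gt hT h.le hf.2.2.1, ext_integral_gt hT h.le hf.2.2.2.1]
      exact hf.2.2.2.2.2.2.2.2 T ⟨hT, le_rfl⟩
  · rw [hcomp_rd, ext_integral_gt hT hTT' hf.2.2.2.1]
    exact hx

lemma D_mono (hEs_nonneg : ∀ t : ℝ, 0 ≤ t → 0 ≤ Es t) (hEs_mono : MonotoneOn Es (Set.Ici 0))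
    (hEr_nonneg : ∀ t : ℝ, 0 ≤ t → 0 ≤ Er t) (hEr_mono : MonotoneOn Er (Set.Ici 0))
    (hBs_nonneg : ∀ t : ℝ, 0 ≤ t → 0 ≤ Bs t) (hBs_mono : MonotoneOn Bs (Set.Ici 0))
    (hrsr0 : rsr 0 = 0) (hrrd0 : rrd 0 = 0) {T T' : ℝ} (hT : 0 ≤ T) (hTT' : T ≤ T') :
    MaxThroughput Es Er Bs rsr rrd T ≤ MaxThroughput Es Er Bs rsr rrd T' := by
  rw [maxThroughput_eq, maxThroughput_eq]
  exact csSup_le_csSup (bddAbove_FS (hT.trans hTT'))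
    ⟨0, zero_mem_FS hEs_nonneg hEr_nonneg hBs_nonneg hrsr0 hrrd0⟩
    (FS_subset hEs_mono hEr_mono hBs_mono hrsr0 hrrd0 hT hTT')

lemma D_nonneg (hEs_nonneg : ∀ t : ℝ, 0 ≤ t → 0 ≤ Es t)
    (hEr_nonneg : ∀ t : ℝ, 0 ≤ t → 0 ≤ Er t)
    (hBs_nonneg : ∀ t : ℝ, 0 ≤ t → 0 ≤ Bs t)
    (hrsr0 : rsr 0 = 0) (hrrd0 : rrd 0 = 0) {T : ℝ} (hT : 0 ≤ T) :
    0 ≤ MaxThroughput Es Er Bs rsr rrd T := by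
  rw [maxThroughput_eq]
  exact le_csSup (bddAbove_FS hT) (zero_mem_FS hEs_nonneg hEr_nonneg hBs_nonneg hrsr0 hrrd0)

lemma D_increment (hEs_nonneg : ∀ t : ℝ, 0 ≤ t → 0 ≤ Es t)
    (hEr_nonneg : ∀ t : ℝ, 0 ≤ t → 0 ≤ Er t)
    (hBs_nonneg : ∀ t : ℝ, 0 ≤ t → 0 ≤ Bs t)
    (hrsr0 : rsr 0 = 0) (hrrd : IsRateFunction rrd)
    {T T' M K : ℝ} (hT : 0 ≤ T) (hTT' : T ≤ T') (hK : 0 < K)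
    (hM : ∀ t ∈ Set.Icc (0:ℝ) T', Er t ≤ M) :
    MaxThroughput Es Er Bs rsr rrd T' ≤
      MaxThroughput Es Er Bs rsr rrd T + (T' - T) * rrd K + rrd K / K * M := by
  have hrrd0 : rrd 0 = 0 := hrrd.2.2.2.1
  have hrK : 0 ≤ rrd K := rate_nonneg hrrd hK.le
  have hM0 : 0 ≤ M := (hEr_nonneg 0 le_rfl).trans (hM 0 ⟨le_rfl, hT.trans hTT'⟩)
  have hDT : 0 ≤ MaxThroughput Es Er Bs rsr rrd T :=
    D_nonneg hEs_nonneg hEr_nonneg hBs_nonneg hrsr0 hrrd0 hT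
  rw [maxThroughput_eq]
  have hnn1 : 0 ≤ (T' - T) * rrd K := mul_nonneg (by linarith) hrK
  have hnn2 : 0 ≤ rrd K / K * M := mul_nonneg (by positivity) hM0
  refine Real.sSup_le ?_ (by linarith)
  rintro x ⟨psr, prd, hf, hx⟩
  have hres := feasible_restrict hT hTT' hf
  have hsub1 : Set.uIcc (0:ℝ) T ⊆ Set.uIcc (0:ℝ) T' := by
    rw [Set.uIcc_of_le hT, Set.uIcc_of_le (hT.trans hTT')]
    exact Set.Icc_subset_Icc_right hTT'
  have hsub2 : Set.uIcc T T' ⊆ Set.uIcc (0:ℝ) T' := by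
    rw [Set.uIcc_of_le hTT', Set.uIcc_of_le (hT.trans hTT')]
    exact Set.Icc_subset_Icc_left hT
  have hint1 : IntervalIntegrable (fun s => rrd (prd s)) volume 0 T :=
    hf.2.2.2.1.mono_set hsub1
  have hint2 : IntervalIntegrable (fun s => rrd (prd s)) volume T T' :=
    hf.2.2.2.1.mono_set hsub2
  have hprd1 : IntervalIntegrable prd volume 0 T := hf.2.1.mono_set hsub1
  have hprd2 : IntervalIntegrable prd volume T T' := hf.2.1.mono_set hsub2
  have hsplit : (∫ t in (0:ℝ)..T, rrd (prd t)) + (∫ t in T..T', rrd (prd t))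
      = ∫ t in (0:ℝ)..T', rrd (prd t) := integral_add_adjacent_intervals hint1 hint2
  have hfirst : (∫ t in (0:ℝ)..T, rrd (prd t)) ≤ MaxThroughput Es Er Bs rsr rrd T := by
    rw [maxThroughput_eq]
    exact le_csSup (bddAbove_FS hT) ⟨psr, prd, hres, rfl⟩
  have hgint : IntervalIntegrable (fun s => rrd K + rrd K / K * prd s) volume T T' :=
    (_root_.intervalIntegrable_const (c := rrd K)).add (hprd2.const_mul _)
  have hptwise : ∀ s ∈ Set.Icc T T', rrd (prd s) ≤ rrd K + rrd K / K * prd s := by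
    intro s hs
    exact rate_le_affine hrrd hK
      (hf.2.2.2.2.1 s ⟨hT.trans hs.1, hs.2⟩).2
  have hmono := integral_mono_on hTT' hint2 hgint hptwise
  have hgval : (∫ s in T..T', rrd K + rrd K / K * prd s)
      = (T' - T) * rrd K + rrd K / K * ∫ s in T..T', prd s := by
    rw [integral_add (_root_.intervalIntegrable_const (c := rrd K)) (hprd2.const_mul _),
      intervalIntegral.integral_const, intervalIntegral.integral_const_mul]
    simp [smul_eq_mul]
  have hprd_split : (∫ s in (0:ℝ)..T, prd s) + (∫ s in T..T', prd s)
      = ∫ s in (0:ℝ)..T', prd s := integral_add_adjacent_intervals hprd1 hprd2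
  have hprd_nonneg : 0 ≤ ∫ s in (0:ℝ)..T, prd s :=
    intervalIntegral.integral_nonneg hT fun u hu =>
      (hf.2.2.2.2.1 u ⟨hu.1, hu.2.trans hTT'⟩).2
  have hEbd : (∫ s in (0:ℝ)..T', prd s) ≤ M :=
    (hf.2.2.2.2.2.2.1 T' ⟨hT.trans hTT', le_rfl⟩).trans (hM T' ⟨hT.trans hTT', le_rfl⟩)
  have hmid : (∫ s in T..T', prd s) ≤ M := by linarith
  have hsecond : (∫ t in T..T', rrd (prd t)) ≤ (T' - T) * rrd K + rrd K / K * M := by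
    rw [hgval] at hmono
    have : rrd K / K * (∫ s in T..T', prd s) ≤ rrd K / K * M :=
      mul_le_mul_of_nonneg_left hmid (by positivity)
    linarith
  calc x = ∫ t in (0:ℝ)..T', rrd (prd t) := hx
    _ = (∫ t in (0:ℝ)..T, rrd (prd t)) + (∫ t in T..T', rrd (prd t)) := hsplit.symm
    _ ≤ MaxThroughput Es Er Bs rsr rrd T + ((T' - T) * rrd K + rrd K / K * M) :=
        add_le_add hfirst hsecond
    _ = _ := by ring

end Main

/-- Second part of Lemma 3.3: if `r_rd(p)/p → 0` as `p → ∞`, the two-hop maximum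
throughput is a continuous function of the deadline on `(0,∞)`. -/
theorem maxThroughput_continuous
    (Es Er Bs : ℝ → ℝ)
    (hEs_nonneg : ∀ t : ℝ, 0 ≤ t → 0 ≤ Es t) (hEs_mono : MonotoneOn Es (Set.Ici 0))
    (hEr_nonneg : ∀ t : ℝ, 0 ≤ t → 0 ≤ Er t) (hEr_mono : MonotoneOn Er (Set.Ici 0))
    (hEr_bdd : ∀ T : ℝ, 0 < T → ∃ M : ℝ, ∀ t ∈ Set.Icc (0:ℝ) T, Er t ≤ M)
    (hBs_nonneg : ∀ t : ℝ, 0 ≤ t → 0 ≤ Bs t) (hBs_mono : MonotoneOn Bs (Set.Ici 0))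
    (rsr rrd : ℝ → ℝ) (hrsr : IsRateFunction rsr) (hrrd : IsRateFunction rrd)
    (hrrd_sublinear : Filter.Tendsto (fun p => rrd p / p) Filter.atTop (nhds 0)) :
    ContinuousOn (MaxThroughput Es Er Bs rsr rrd) (Set.Ioi 0) := by
  have hrsr0 : rsr 0 = 0 := hrsr.2.2.2.1
  have hrrd0 : rrd 0 = 0 := hrrd.2.2.2.1
  intro T hT
  have hT0 : (0:ℝ) < T := hT
  rw [Metric.continuousWithinAt_iff]
  intro ε hε
  obtain ⟨M, hM⟩ := hEr_bdd (T + 1) (by linarith)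
  have hM0 : 0 ≤ M := (hEr_nonneg 0 le_rfl).trans (hM 0 ⟨le_rfl, by linarith⟩)
  -- choose K
  have hpos : (0:ℝ) < ε / (4 * (M + 1)) := by positivity
  obtain ⟨K, hKs, hK1⟩ :=
    ((hrrd_sublinear.eventually (gt_mem_nhds hpos)).and (eventually_ge_atTop (1:ℝ))).exists
  have hK0 : (0:ℝ) < K := lt_of_lt_of_le one_pos hK1
  have hrK : 0 ≤ rrd K := rate_nonneg hrrd hK0.le
  have hcM : rrd K / K * M < ε / 4 := by
    have h1 : rrd K / K < ε / (4 * (M + 1)) := hKs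
    have h3 : rrd K / K * M ≤ ε / (4 * (M + 1)) * M := mul_le_mul_of_nonneg_right h1.le hM0
    have h4 : ε / (4 * (M + 1)) * M < ε / 4 := by
      rw [div_mul_eq_mul_div, div_lt_div_iff₀ (by positivity) (by norm_num : (0:ℝ) < 4)]
      nlinarith
    linarith
  -- choose δ
  refine ⟨min (min (T / 2) 1) (ε / (4 * (rrd K + 1))), by positivity, ?_⟩
  intro y hy hdist
  set δ := min (min (T / 2) 1) (ε / (4 * (rrd K + 1))) with hδ
  have hδ1 : δ ≤ T / 2 := (min_le_left _ _).trans (min_le_left _ _)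
  have hδ2 : δ ≤ 1 := (min_le_left _ _).trans (min_le_right _ _)
  have hδ3 : δ ≤ ε / (4 * (rrd K + 1)) := min_le_right _ _
  have hy0 : (0:ℝ) < y := hy
  rw [Real.dist_eq] at hdist
  rw [Real.dist_eq]
  have habs : |y - T| < δ := hdist
  have hyT : T - δ < y ∧ y < T + δ := by
    have h := abs_sub_lt_iff.mp habs
    exact ⟨by linarith [h.2], by linarith [h.1]⟩
  have hbound : ∀ a b : ℝ, 0 ≤ a → a ≤ b → b - a < δ → b ≤ T + 1 →
      MaxThroughput Es Er Bs rsr rrd b ≤ MaxThroughput Es Er Bs rsr rrd a + ε / 2 := by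
    intro a b ha hab hba hb1
    have hMab : ∀ t ∈ Set.Icc (0:ℝ) b, Er t ≤ M := fun t ht =>
      hM t ⟨ht.1, ht.2.trans hb1⟩
    have := D_increment (Es := Es) (Er := Er) (Bs := Bs) (rsr := rsr) (rrd := rrd)
      hEs_nonneg hEr_nonneg hBs_nonneg hrsr0 hrrd ha hab hK0 hMab
    have hterm : (b - a) * rrd K < ε / 4 := by
      have hpos' : (0:ℝ) < rrd K + 1 := by positivity
      have h5 : (b - a) * rrd K ≤ (b - a) * (rrd K + 1) := by nlinarith
      have h6 : (b - a) * (rrd K + 1) < δ * (rrd K + 1) :=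
        mul_lt_mul_of_pos_right hba hpos'
      have h7 : δ * (rrd K + 1) ≤ ε / 4 := by
        calc δ * (rrd K + 1) ≤ ε / (4 * (rrd K + 1)) * (rrd K + 1) :=
              mul_le_mul_of_nonneg_right hδ3 hpos'.le
          _ = ε / 4 := by field_simp
      linarith
    linarith
  have hmono := fun {a b : ℝ} (ha : 0 ≤ a) (hab : a ≤ b) =>
    D_mono (Es := Es) (Er := Er) (Bs := Bs) (rsr := rsr) (rrd := rrd)
      hEs_nonneg hEs_mono hEr_nonneg hEr_mono hBs_nonneg hBs_mono hrsr0 hrrd0 ha hab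
  rcases le_total y T with hle | hge
  · have h1 : MaxThroughput Es Er Bs rsr rrd y ≤ MaxThroughput Es Er Bs rsr rrd T :=
      hmono hy0.le hle
    have h2 : MaxThroughput Es Er Bs rsr rrd T ≤ MaxThroughput Es Er Bs rsr rrd y + ε / 2 :=
      hbound y T hy0.le hle (by linarith [hyT.1]) (by linarith)
    rw [abs_lt]; constructor <;> linarith
  · have h1 : MaxThroughput Es Er Bs rsr rrd T ≤ MaxThroughput Es Er Bs rsr rrd y :=
      hmono hT0.le hge
    have h2 : MaxThroughput Es Er Bs rsr rrd y ≤ MaxThroughput Es Er Bs rsr rrd T + ε / 2 :=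
      hbound T y hT0.le hge (by linarith [hyT.2]) (by linarith [hyT.2, hδ2])
    rw [abs_lt]; constructor <;> linarith
end
end

section
/- Consider a multi-hop channel with nodes 0, 1, …, n+1 (node 0 the source, nodes 1,…,n relays, node n+1 the destination). Let E_0, …, E_n : [0,∞) → [0,∞) be nondecreasing harvested-energy curves (E_i at node i) with E_n bounded on every compact interval, let B_s : [0,∞) → [0,∞) be nondecreasing, and let r_0, …, r_n be rate functions (r_i for the hop from node i to node i+1) with lim_{p→∞} r_n(p)/p = 0. For T > 0, define D(T) as the supremum of ∫₀ᵀ r_n(p_n(t)) dt over all multi-hop feasible tuples (p_0, …, p_n) on [0,T]. Then D is nondecreasing and continuous on (0,∞); moreover, for B₀ > 0, if C = {t > 0 : D(t) = B₀} is nonempty, then T_min := inf C is attained and equals inf{ T > 0 : D(T) ≥ B₀ }, i.e., T_min is the minimum completion time for delivering B₀ units of data to the destination. -/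
open MeasureTheory Set Filter intervalIntegral

noncomputable section

/-- Multi-hop feasibility of a tuple of power policies `p 0, …, p n` on `[0,T]`
for a chain with `n` relays: node `i` transmits with power policy `p i` over the
hop with rate function `r i`, using harvested energy `E i`; `Bs` is the arrival
data curve at the source (node `0`). -/
def MultiHopFeasible (n : ℕ) (T : ℝ) (E : ℕ → ℝ → ℝ) (Bs : ℝ → ℝ)
    (r : ℕ → ℝ → ℝ) (p : ℕ → ℝ → ℝ) : Prop :=
  (∀ i ≤ n, IntervalIntegrable (p i) MeasureTheory.volume 0 T) ∧
  (∀ i ≤ n, IntervalIntegrable (fun s => r i (p i s)) MeasureTheory.volume 0 T) ∧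
  (∀ i ≤ n, ∀ t ∈ Set.Icc (0:ℝ) T, 0 ≤ p i t) ∧
  (∀ i ≤ n, ∀ t ∈ Set.Icc (0:ℝ) T, (∫ s in (0:ℝ)..t, p i s) ≤ E i t) ∧
  (∀ t ∈ Set.Icc (0:ℝ) T, (∫ s in (0:ℝ)..t, r 0 (p 0 s)) ≤ Bs t) ∧
  (∀ i : ℕ, i + 1 ≤ n → ∀ t ∈ Set.Icc (0:ℝ) T,
    (∫ s in (0:ℝ)..t, r (i+1) (p (i+1) s)) ≤ ∫ s in (0:ℝ)..t, r i (p i s))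

/-- The multi-hop maximum throughput by deadline `T`. -/
def MultiHopThroughput (n : ℕ) (E : ℕ → ℝ → ℝ) (Bs : ℝ → ℝ)
    (r : ℕ → ℝ → ℝ) (T : ℝ) : ℝ :=
  sSup {x : ℝ | ∃ p : ℕ → ℝ → ℝ, MultiHopFeasible n T E Bs r p ∧
    x = ∫ t in (0:ℝ)..T, r n (p n t)}


lemma rate_nonneg_s8 {ρ : ℝ → ℝ} (hρ : IsRateFunction ρ) {x : ℝ} (hx : 0 ≤ x) : 0 ≤ ρ x := by
  have h0 := hρ.2.2.2.1
  rcases eq_or_lt_of_le hx with h | h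
  · simp [← h, h0]
  · have := hρ.2.1 (mem_Ici.mpr le_rfl) (mem_Ici.mpr hx) h
    linarith

lemma pt_bound {ρ : ℝ → ℝ} (hρ : IsRateFunction ρ) {a x : ℝ} (ha : 0 < a) (hx : 0 ≤ x) :
    ρ x ≤ ρ a + ρ a / a * x := by
  have hρa : 0 ≤ ρ a := rate_nonneg_s8 hρ ha.le
  have hc : 0 ≤ ρ a / a * x := mul_nonneg (div_nonneg hρa ha.le) hx
  rcases le_or_gt x a with h | h
  · have : ρ x ≤ ρ a := hρ.2.1.monotoneOn (mem_Ici.mpr hx) (mem_Ici.mpr ha.le) h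
    linarith
  · have hx0 : 0 < x := ha.trans h
    have hcc := hρ.2.2.1.2
    have key := hcc (x := x) (y := 0) (a := a/x) (b := 1 - a/x)
      (mem_Ici.mpr hx) (mem_Ici.mpr (le_refl (0:ℝ)))
      (div_nonneg ha.le hx0.le)
      (by rw [sub_nonneg]; exact (div_le_one hx0).mpr h.le)
      (by ring)
    simp only [smul_eq_mul, mul_zero, add_zero, hρ.2.2.2.1, div_mul_cancel₀ a hx0.ne'] at key
    -- key : a / x * ρ x ≤ ρ a
    have key2 : a * ρ x ≤ ρ a * x := by
      have h' := mul_le_mul_of_nonneg_right key hx0.le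
      have he : a / x * ρ x * x = a * ρ x := by field_simp
      linarith [he ▸ h']
    have hle : ρ x ≤ ρ a * x / a := by
      rw [le_div_iff₀ ha]; linarith
    have hd : ρ a / a * x = ρ a * x / a := by ring
    linarith

lemma ite_intervalIntegrable {g : ℝ → ℝ} {T₁ : ℝ} (h1 : 0 ≤ T₁)
    (hg : IntervalIntegrable g volume 0 T₁) {t : ℝ} (ht : 0 ≤ t) :
    IntervalIntegrable (fun s => if s ≤ T₁ then g s else 0) volume 0 t := by
  rcases le_or_gt t T₁ with h | h
  · refine (hg.mono_set ?_).congr ?_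
    · rw [uIcc_of_le ht, uIcc_of_le h1]; exact Icc_subset_Icc le_rfl h
    · intro s hs
      rw [uIoc_of_le ht] at hs
      simp [hs.2.trans h]
  · have i1 : IntervalIntegrable (fun s => if s ≤ T₁ then g s else 0) volume 0 T₁ := by
      refine hg.congr ?_
      intro s hs
      rw [uIoc_of_le h1] at hs
      simp [hs.2]
    have i2 : IntervalIntegrable (fun s => if s ≤ T₁ then g s else 0) volume T₁ t := by
      refine (_root_.intervalIntegrable_const (c := (0:ℝ))).congr ?_
      intro s hs
      rw [uIoc_of_le h.le] at hs
      simp [not_le.mpr hs.1]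
    exact i1.trans i2

lemma ite_integral {g : ℝ → ℝ} {T₁ : ℝ} (h1 : 0 ≤ T₁)
    (hg : IntervalIntegrable g volume 0 T₁) {t : ℝ} (ht : 0 ≤ t) :
    (∫ s in (0:ℝ)..t, if s ≤ T₁ then g s else 0) = ∫ s in (0:ℝ)..(min t T₁), g s := by
  rcases le_or_gt t T₁ with h | h
  · rw [min_eq_left h]
    apply intervalIntegral.integral_congr_ae
    filter_upwards with s hs
    rw [uIoc_of_le ht] at hs
    simp [hs.2.trans h]
  · rw [min_eq_right h.le]
    have i1 := ite_intervalIntegrable h1 hg h1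
    have i2 : IntervalIntegrable (fun s => if s ≤ T₁ then g s else 0) volume T₁ t := by
      refine (_root_.intervalIntegrable_const (c := (0:ℝ))).congr ?_
      intro s hs
      rw [uIoc_of_le h.le] at hs
      simp [not_le.mpr hs.1]
    rw [← integral_add_adjacent_intervals i1 i2]
    have e1 : (∫ s in (0:ℝ)..T₁, if s ≤ T₁ then g s else 0) = ∫ s in (0:ℝ)..T₁, g s := by
      apply intervalIntegral.integral_congr_ae
      filter_upwards with s hs
      rw [uIoc_of_le h1] at hs
      simp [hs.2]
    have e2 : (∫ s in T₁..t, if s ≤ T₁ then g s else 0) = 0 := by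
      rw [show (0:ℝ) = ∫ s in T₁..t, (0:ℝ) by simp]
      apply intervalIntegral.integral_congr_ae
      filter_upwards with s hs
      rw [uIoc_of_le h.le] at hs
      simp [not_le.mpr hs.1]
    rw [e1, e2, add_zero]

lemma tail_bound {ρ : ℝ → ℝ} (hρ : IsRateFunction ρ) {a T₁ T₂ : ℝ} (ha : 0 < a)
    (h0 : 0 ≤ T₁) (h12 : T₁ ≤ T₂) {f : ℝ → ℝ}
    (hf : IntervalIntegrable f volume 0 T₂)
    (hrf : IntervalIntegrable (fun s => ρ (f s)) volume 0 T₂)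
    (hfnn : ∀ t ∈ Icc (0:ℝ) T₂, 0 ≤ f t)
    {M : ℝ} (hM : (∫ s in (0:ℝ)..T₂, f s) ≤ M) :
    (∫ s in T₁..T₂, ρ (f s)) ≤ (T₂ - T₁) * ρ a + ρ a / a * M := by
  have h02 : (0:ℝ) ≤ T₂ := h0.trans h12
  have hsub : uIcc T₁ T₂ ⊆ uIcc 0 T₂ := by
    rw [uIcc_of_le h12, uIcc_of_le h02]; exact Icc_subset_Icc h0 le_rfl
  have hsub' : uIcc (0:ℝ) T₁ ⊆ uIcc 0 T₂ := by
    rw [uIcc_of_le h0, uIcc_of_le h02]; exact Icc_subset_Icc le_rfl h12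
  have hρa : 0 ≤ ρ a := rate_nonneg_s8 hρ ha.le
  have hc : 0 ≤ ρ a / a := div_nonneg hρa ha.le
  have hfi : IntervalIntegrable f volume T₁ T₂ := hf.mono_set hsub
  have hint2 : IntervalIntegrable (fun s => ρ a + ρ a / a * f s) volume T₁ T₂ :=
    (_root_.intervalIntegrable_const).add (hfi.const_mul _)
  have step1 : (∫ s in T₁..T₂, ρ (f s)) ≤ ∫ s in T₁..T₂, (ρ a + ρ a / a * f s) := by
    refine integral_mono_on h12 (hrf.mono_set hsub) hint2 (fun x hx => ?_)
    exact pt_bound hρ ha (hfnn x ⟨h0.trans hx.1, hx.2⟩)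
  have step2 : (∫ s in T₁..T₂, (ρ a + ρ a / a * f s))
      = (T₂ - T₁) * ρ a + ρ a / a * ∫ s in T₁..T₂, f s := by
    rw [integral_add (_root_.intervalIntegrable_const) (hfi.const_mul _),
      intervalIntegral.integral_const, intervalIntegral.integral_const_mul, smul_eq_mul]
  have step3 : (∫ s in T₁..T₂, f s) ≤ M := by
    have hadd := integral_add_adjacent_intervals (hf.mono_set hsub') hfi
    have hpos : 0 ≤ ∫ s in (0:ℝ)..T₁, f s :=
      intervalIntegral.integral_nonneg h0 (fun u hu => hfnn u ⟨hu.1, hu.2.trans h12⟩)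
    linarith
  have := mul_le_mul_of_nonneg_left step3 hc
  linarith

def FSet (n : ℕ) (E : ℕ → ℝ → ℝ) (Bs : ℝ → ℝ) (r : ℕ → ℝ → ℝ) (T : ℝ) : Set ℝ :=
  {x : ℝ | ∃ p : ℕ → ℝ → ℝ, MultiHopFeasible n T E Bs r p ∧
    x = ∫ t in (0:ℝ)..T, r n (p n t)}

variable {n : ℕ} {E : ℕ → ℝ → ℝ} {Bs : ℝ → ℝ} {r : ℕ → ℝ → ℝ}

lemma feasible_zero (hE : ∀ i ≤ n, ∀ t : ℝ, 0 ≤ t → 0 ≤ E i t)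
    (hBs : ∀ t : ℝ, 0 ≤ t → 0 ≤ Bs t)
    (hr : ∀ i ≤ n, IsRateFunction (r i)) (T : ℝ) :
    MultiHopFeasible n T E Bs r (fun _ _ => 0) := by
  have hr0 : ∀ i ≤ n, r i 0 = 0 := fun i hi => (hr i hi).2.2.2.1
  refine ⟨fun i _ => intervalIntegrable_const,
    fun i hi => by simpa [hr0 i hi] using (intervalIntegrable_const (μ := volume) (a := (0:ℝ)) (b := T) (c := (0:ℝ))),
    fun i _ t _ => le_rfl, fun i hi t ht => ?_, fun t ht => ?_, fun i hi t ht => ?_⟩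
  · simpa using hE i hi t ht.1
  · simpa [hr0 0 (Nat.zero_le n)] using hBs t ht.1
  · simp [hr0 (i+1) hi, hr0 i (le_of_lt (Nat.lt_of_lt_of_le (Nat.lt_succ_self i) hi))]

lemma zero_mem_FSet (hE : ∀ i ≤ n, ∀ t : ℝ, 0 ≤ t → 0 ≤ E i t)
    (hBs : ∀ t : ℝ, 0 ≤ t → 0 ≤ Bs t)
    (hr : ∀ i ≤ n, IsRateFunction (r i)) (T : ℝ) :
    (0:ℝ) ∈ FSet n E Bs r T :=
  ⟨fun _ _ => 0, feasible_zero hE hBs hr T, by simp [(hr n le_rfl).2.2.2.1]⟩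

lemma restrict_feasible {T₁ T₂ : ℝ} (h0 : 0 ≤ T₁) (h12 : T₁ ≤ T₂) {p : ℕ → ℝ → ℝ}
    (hp : MultiHopFeasible n T₂ E Bs r p) : MultiHopFeasible n T₁ E Bs r p := by
  have hIcc : Icc (0:ℝ) T₁ ⊆ Icc 0 T₂ := Icc_subset_Icc le_rfl h12
  have hsub : uIcc (0:ℝ) T₁ ⊆ uIcc 0 T₂ := by
    rw [uIcc_of_le h0, uIcc_of_le (h0.trans h12)]; exact hIcc
  obtain ⟨a1, a2, a3, a4, a5, a6⟩ := hp
  exact ⟨fun i hi => (a1 i hi).mono_set hsub, fun i hi => (a2 i hi).mono_set hsub,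
    fun i hi t ht => a3 i hi t (hIcc ht), fun i hi t ht => a4 i hi t (hIcc ht),
    fun t ht => a5 t (hIcc ht), fun i hi t ht => a6 i hi t (hIcc ht)⟩

lemma extend_feasible (hE_mono : ∀ i ≤ n, MonotoneOn (E i) (Set.Ici 0))
    (hBs_mono : MonotoneOn Bs (Set.Ici 0))
    (hr : ∀ i ≤ n, IsRateFunction (r i))
    {T₁ T₂ : ℝ} (h0 : 0 ≤ T₁) (h12 : T₁ ≤ T₂) {p : ℕ → ℝ → ℝ}
    (hp : MultiHopFeasible n T₁ E Bs r p) :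
    MultiHopFeasible n T₂ E Bs r (fun i t => if t ≤ T₁ then p i t else 0) ∧
    (∫ t in (0:ℝ)..T₂, r n (if t ≤ T₁ then p n t else 0)) = ∫ t in (0:ℝ)..T₁, r n (p n t) := by
  have h02 : (0:ℝ) ≤ T₂ := h0.trans h12
  have hr0 : ∀ i ≤ n, r i 0 = 0 := fun i hi => (hr i hi).2.2.2.1
  obtain ⟨a1, a2, a3, a4, a5, a6⟩ := hp
  have hkey : ∀ i ≤ n, (fun s => r i (if s ≤ T₁ then p i s else 0))
      = fun s => if s ≤ T₁ then r i (p i s) else 0 := by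
    intro i hi; funext s; split <;> simp [hr0 i hi]
  have hmin : ∀ t : ℝ, 0 ≤ t → min t T₁ ∈ Icc (0:ℝ) T₁ :=
    fun t ht => ⟨le_min ht h0, min_le_right _ _⟩
  have hIeq : ∀ i, i ≤ n → ∀ t : ℝ, 0 ≤ t →
      (∫ s in (0:ℝ)..t, r i (if s ≤ T₁ then p i s else 0))
        = ∫ s in (0:ℝ)..(min t T₁), r i (p i s) := by
    intro i hi t ht
    rw [hkey i hi]
    exact ite_integral h0 (a2 i hi) ht
  constructor
  · refine ⟨fun i hi => ite_intervalIntegrable h0 (a1 i hi) h02,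
      fun i hi => ?_, fun i hi t ht => ?_, fun i hi t ht => ?_, fun t ht => ?_,
      fun i hi t ht => ?_⟩
    · rw [hkey i hi]; exact ite_intervalIntegrable h0 (a2 i hi) h02
    · dsimp only; split
      · exact a3 i hi t ⟨ht.1, by assumption⟩
      · exact le_rfl
    · dsimp only
      rw [ite_integral h0 (a1 i hi) ht.1]
      exact (a4 i hi _ (hmin t ht.1)).trans
        (hE_mono i hi (mem_Ici.mpr (le_min ht.1 h0)) (mem_Ici.mpr ht.1) (min_le_left _ _))
    · dsimp only
      rw [hIeq 0 (Nat.zero_le n) t ht.1]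
      exact (a5 _ (hmin t ht.1)).trans
        (hBs_mono (mem_Ici.mpr (le_min ht.1 h0)) (mem_Ici.mpr ht.1) (min_le_left _ _))
    · have hi1 : i + 1 ≤ n := hi
      have hi0 : i ≤ n := le_of_lt (Nat.lt_of_lt_of_le (Nat.lt_succ_self i) hi)
      dsimp only
      rw [hIeq (i+1) hi1 t ht.1, hIeq i hi0 t ht.1]
      exact a6 i hi _ (hmin t ht.1)
  · rw [hIeq n le_rfl T₂ h02, min_eq_right h12]

lemma FSet_le_bound (hr : ∀ i ≤ n, IsRateFunction (r i)) {T a M : ℝ}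
    (h0 : 0 ≤ T) (ha : 0 < a) (hM : E n T ≤ M) :
    ∀ x ∈ FSet n E Bs r T, x ≤ T * r n a + r n a / a * M := by
  rintro x ⟨p, hp, rfl⟩
  have := tail_bound (hr n le_rfl) ha le_rfl h0 (hp.1 n le_rfl) (hp.2.1 n le_rfl)
    (fun t ht => hp.2.2.1 n le_rfl t ht)
    ((hp.2.2.2.1 n le_rfl T ⟨h0, le_rfl⟩).trans hM)
  simpa using this

lemma bddAbove_FSet (hr : ∀ i ≤ n, IsRateFunction (r i))
    (hEn_bdd : ∀ T : ℝ, 0 < T → ∃ M : ℝ, ∀ t ∈ Set.Icc (0:ℝ) T, E n t ≤ M)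
    {T : ℝ} (hT : 0 < T) : BddAbove (FSet n E Bs r T) := by
  obtain ⟨M, hM⟩ := hEn_bdd T hT
  exact ⟨T * r n 1 + r n 1 / 1 * M,
    FSet_le_bound hr hT.le one_pos (hM T ⟨hT.le, le_rfl⟩)⟩

lemma throughput_eq (T : ℝ) : MultiHopThroughput n E Bs r T = sSup (FSet n E Bs r T) := rfl

lemma D_mono_s8 (hE_nonneg : ∀ i ≤ n, ∀ t : ℝ, 0 ≤ t → 0 ≤ E i t)
    (hE_mono : ∀ i ≤ n, MonotoneOn (E i) (Set.Ici 0))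
    (hEn_bdd : ∀ T : ℝ, 0 < T → ∃ M : ℝ, ∀ t ∈ Set.Icc (0:ℝ) T, E n t ≤ M)
    (hBs_nonneg : ∀ t : ℝ, 0 ≤ t → 0 ≤ Bs t) (hBs_mono : MonotoneOn Bs (Set.Ici 0))
    (hr : ∀ i ≤ n, IsRateFunction (r i))
    {T₁ T₂ : ℝ} (h1 : 0 < T₁) (h12 : T₁ ≤ T₂) :
    MultiHopThroughput n E Bs r T₁ ≤ MultiHopThroughput n E Bs r T₂ := by
  rw [throughput_eq, throughput_eq]
  refine csSup_le ⟨0, zero_mem_FSet hE_nonneg hBs_nonneg hr T₁⟩ ?_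
  rintro x ⟨p, hp, rfl⟩
  obtain ⟨hq, hval⟩ := extend_feasible hE_mono hBs_mono hr h1.le h12 hp
  exact le_csSup (bddAbove_FSet hr hEn_bdd (h1.trans_le h12)) ⟨_, hq, hval.symm⟩

lemma D_approx (hE_nonneg : ∀ i ≤ n, ∀ t : ℝ, 0 ≤ t → 0 ≤ E i t)
    (hBs_nonneg : ∀ t : ℝ, 0 ≤ t → 0 ≤ Bs t)
    (hEn_bdd : ∀ T : ℝ, 0 < T → ∃ M : ℝ, ∀ t ∈ Set.Icc (0:ℝ) T, E n t ≤ M)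
    (hr : ∀ i ≤ n, IsRateFunction (r i))
    {T₁ T₂ a M : ℝ} (h1 : 0 < T₁) (h12 : T₁ ≤ T₂) (ha : 0 < a)
    (hM : ∀ t ∈ Set.Icc (0:ℝ) T₂, E n t ≤ M) :
    MultiHopThroughput n E Bs r T₂
      ≤ MultiHopThroughput n E Bs r T₁ + (T₂ - T₁) * r n a + r n a / a * M := by
  have h02 : (0:ℝ) ≤ T₂ := h1.le.trans h12
  rw [throughput_eq, throughput_eq]
  refine csSup_le ⟨0, zero_mem_FSet hE_nonneg hBs_nonneg hr T₂⟩ ?_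
  rintro x ⟨p, hp, rfl⟩
  have hsub : uIcc (0:ℝ) T₁ ⊆ uIcc 0 T₂ := by
    rw [uIcc_of_le h1.le, uIcc_of_le h02]; exact Icc_subset_Icc le_rfl h12
  have hsub2 : uIcc T₁ T₂ ⊆ uIcc 0 T₂ := by
    rw [uIcc_of_le h12, uIcc_of_le h02]; exact Icc_subset_Icc h1.le le_rfl
  have hadd := integral_add_adjacent_intervals
    ((hp.2.1 n le_rfl).mono_set hsub) ((hp.2.1 n le_rfl).mono_set hsub2)
  have hhead : (∫ t in (0:ℝ)..T₁, r n (p n t)) ≤ sSup (FSet n E Bs r T₁) :=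
    le_csSup (bddAbove_FSet hr hEn_bdd h1) ⟨p, restrict_feasible h1.le h12 hp, rfl⟩
  have htail := tail_bound (hr n le_rfl) ha h1.le h12 (hp.1 n le_rfl) (hp.2.1 n le_rfl)
    (fun t ht => hp.2.2.1 n le_rfl t ht)
    ((hp.2.2.2.1 n le_rfl T₂ ⟨h02, le_rfl⟩).trans (hM T₂ ⟨h02, le_rfl⟩))
  linarith

lemma exists_sublinear_pt (hrn : Filter.Tendsto (fun p => r n p / p) Filter.atTop (nhds 0))
    {c : ℝ} (hc : 0 < c) : ∃ a : ℝ, 1 ≤ a ∧ r n a / a < c := by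
  have h := (hrn.eventually_lt_const hc).and (eventually_ge_atTop (1:ℝ))
  obtain ⟨a, h1, h2⟩ := h.exists
  exact ⟨a, h2, h1⟩

lemma prod_half {c x M : ℝ} (hM : 0 ≤ M) (hc : 0 < c) (hx : 0 ≤ x) (h : x < c/(2*(M+1))) :
    x * M < c / 2 := by
  have h1 : x * M ≤ x * (M + 1) := by nlinarith
  have h2 : x * (M + 1) < c/(2*(M+1)) * (M+1) := by
    apply mul_lt_mul_of_pos_right h; linarith
  have h3 : c/(2*(M+1)) * (M+1) = c/2 := by field_simp
  linarith

lemma D_cont (hE_nonneg : ∀ i ≤ n, ∀ t : ℝ, 0 ≤ t → 0 ≤ E i t)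
    (hE_mono : ∀ i ≤ n, MonotoneOn (E i) (Set.Ici 0))
    (hEn_bdd : ∀ T : ℝ, 0 < T → ∃ M : ℝ, ∀ t ∈ Set.Icc (0:ℝ) T, E n t ≤ M)
    (hBs_nonneg : ∀ t : ℝ, 0 ≤ t → 0 ≤ Bs t) (hBs_mono : MonotoneOn Bs (Set.Ici 0))
    (hr : ∀ i ≤ n, IsRateFunction (r i))
    (hrn_sublinear : Filter.Tendsto (fun p => r n p / p) Filter.atTop (nhds 0)) :
    ContinuousOn (MultiHopThroughput n E Bs r) (Set.Ioi 0) := by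
  intro T₀ hT₀
  have hT₀' : (0:ℝ) < T₀ := hT₀
  suffices h : ContinuousAt (MultiHopThroughput n E Bs r) T₀ from h.continuousWithinAt
  rw [Metric.continuousAt_iff]
  intro ε hε
  obtain ⟨M₀, hM₀⟩ := hEn_bdd (T₀ + 1) (by linarith)
  set M := max M₀ 0 with hMdef
  have hM : ∀ t ∈ Set.Icc (0:ℝ) (T₀+1), E n t ≤ M := fun t ht => (hM₀ t ht).trans (le_max_left _ _)
  have hM0 : (0:ℝ) ≤ M := le_max_right _ _
  obtain ⟨a, ha1, hac⟩ := exists_sublinear_pt hrn_sublinear (c := ε/(2*(M+1))) (by positivity)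
  have ha : (0:ℝ) < a := lt_of_lt_of_le one_pos ha1
  have hρa : 0 ≤ r n a := rate_nonneg_s8 (hr n le_rfl) ha.le
  have hca : 0 ≤ r n a / a := div_nonneg hρa ha.le
  have hMhalf : r n a / a * M < ε/2 := prod_half hM0 hε hca hac
  set δ := min (min (T₀/2) 1) (ε/(2*(r n a + 1))) with hδdef
  have hδpos : 0 < δ := by
    apply lt_min (lt_min (by linarith) one_pos); positivity
  have hd1 : δ ≤ T₀/2 := le_trans (min_le_left _ _) (min_le_left _ _)
  have hd2 : δ ≤ 1 := le_trans (min_le_left _ _) (min_le_right _ _)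
  have hd3 : δ ≤ ε/(2*(r n a + 1)) := min_le_right _ _
  have hδr : δ * r n a < ε/2 := by
    have h1 : δ * r n a ≤ δ * (r n a + 1) := by nlinarith
    have h2 : δ * (r n a + 1) ≤ ε/(2*(r n a + 1)) * (r n a + 1) := by
      apply mul_le_mul_of_nonneg_right hd3; linarith
    have h3 : ε/(2*(r n a + 1)) * (r n a + 1) = ε/2 := by field_simp
    linarith
  refine ⟨δ, hδpos, fun {T} hT => ?_⟩
  rw [Real.dist_eq] at hT ⊢
  have habs := abs_lt.mp hT
  have hTpos : 0 < T := by linarith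
  have hT1 : T ≤ T₀ + 1 := by linarith
  rcases le_total T T₀ with hle | hle
  · have hmono := D_mono_s8 hE_nonneg hE_mono hEn_bdd hBs_nonneg hBs_mono hr hTpos hle
    have happrox := D_approx hE_nonneg hBs_nonneg hEn_bdd hr hTpos hle ha
      (M := M) (fun t ht => hM t ⟨ht.1, by linarith [ht.2]⟩)
    have hgap : (T₀ - T) * r n a ≤ δ * r n a :=
      mul_le_mul_of_nonneg_right (by linarith) hρa
    rw [abs_of_nonpos (by linarith)]
    linarith
  · have hmono := D_mono_s8 hE_nonneg hE_mono hEn_bdd hBs_nonneg hBs_mono hr hT₀' hle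
    have happrox := D_approx hE_nonneg hBs_nonneg hEn_bdd hr hT₀' hle ha
      (M := M) (fun t ht => hM t ⟨ht.1, by linarith [ht.2]⟩)
    have hgap : (T - T₀) * r n a ≤ δ * r n a :=
      mul_le_mul_of_nonneg_right (by linarith) hρa
    rw [abs_of_nonneg (by linarith)]
    linarith

lemma D_small (hE_nonneg : ∀ i ≤ n, ∀ t : ℝ, 0 ≤ t → 0 ≤ E i t)
    (hEn_bdd : ∀ T : ℝ, 0 < T → ∃ M : ℝ, ∀ t ∈ Set.Icc (0:ℝ) T, E n t ≤ M)
    (hBs_nonneg : ∀ t : ℝ, 0 ≤ t → 0 ≤ Bs t)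
    (hr : ∀ i ≤ n, IsRateFunction (r i))
    (hrn_sublinear : Filter.Tendsto (fun p => r n p / p) Filter.atTop (nhds 0))
    {B₀ : ℝ} (hB₀ : 0 < B₀) :
    ∃ δ : ℝ, 0 < δ ∧ ∀ t : ℝ, 0 < t → t < δ → MultiHopThroughput n E Bs r t < B₀ := by
  obtain ⟨M₀, hM₀⟩ := hEn_bdd 1 one_pos
  set M := max M₀ 0 with hMdef
  have hM : ∀ t ∈ Set.Icc (0:ℝ) 1, E n t ≤ M := fun t ht => (hM₀ t ht).trans (le_max_left _ _)
  have hM0 : (0:ℝ) ≤ M := le_max_right _ _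
  obtain ⟨a, ha1, hac⟩ := exists_sublinear_pt hrn_sublinear (c := B₀/(2*(M+1))) (by positivity)
  have ha : (0:ℝ) < a := lt_of_lt_of_le one_pos ha1
  have hρa : 0 ≤ r n a := rate_nonneg_s8 (hr n le_rfl) ha.le
  have hca : 0 ≤ r n a / a := div_nonneg hρa ha.le
  have hMhalf : r n a / a * M < B₀/2 := prod_half hM0 hB₀ hca hac
  refine ⟨min 1 (B₀/(2*(r n a + 1))), by positivity, fun t ht hlt => ?_⟩
  have ht1 : t ≤ 1 := (hlt.trans_le (min_le_left _ _)).le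
  have ht2 : t < B₀/(2*(r n a + 1)) := hlt.trans_le (min_le_right _ _)
  have hbound : MultiHopThroughput n E Bs r t ≤ t * r n a + r n a / a * M := by
    rw [throughput_eq]
    exact csSup_le ⟨0, zero_mem_FSet hE_nonneg hBs_nonneg hr t⟩
      (FSet_le_bound hr ht.le ha (hM t ⟨ht.le, ht1⟩))
  have h1 : t * r n a ≤ t * (r n a + 1) := by nlinarith
  have h2 : t * (r n a + 1) < B₀/(2*(r n a + 1)) * (r n a + 1) := by
    apply mul_lt_mul_of_pos_right ht2; linarith
  have h3 : B₀/(2*(r n a + 1)) * (r n a + 1) = B₀/2 := by field_simp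
  linarith

/-- Corollary 2: in a multi-hop channel with `n` relays, the maximum throughput
`D` is nondecreasing and continuous on `(0,∞)`, and if the level set
`C = {t > 0 : D(t) = B₀}` is nonempty then `T_min = inf C` is attained and is
the minimum completion time for delivering `B₀` units of data. -/
theorem multihop_completion_time
    (n : ℕ) (E : ℕ → ℝ → ℝ) (Bs : ℝ → ℝ) (r : ℕ → ℝ → ℝ)
    (hE_nonneg : ∀ i ≤ n, ∀ t : ℝ, 0 ≤ t → 0 ≤ E i t)
    (hE_mono : ∀ i ≤ n, MonotoneOn (E i) (Set.Ici 0))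
    (hEn_bdd : ∀ T : ℝ, 0 < T → ∃ M : ℝ, ∀ t ∈ Set.Icc (0:ℝ) T, E n t ≤ M)
    (hBs_nonneg : ∀ t : ℝ, 0 ≤ t → 0 ≤ Bs t) (hBs_mono : MonotoneOn Bs (Set.Ici 0))
    (hr : ∀ i ≤ n, IsRateFunction (r i))
    (hrn_sublinear : Filter.Tendsto (fun p => r n p / p) Filter.atTop (nhds 0))
    (B₀ : ℝ) (hB₀ : 0 < B₀) :
    (∀ T₁ T₂ : ℝ, 0 < T₁ → T₁ ≤ T₂ →
      MultiHopThroughput n E Bs r T₁ ≤ MultiHopThroughput n E Bs r T₂) ∧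
    ContinuousOn (MultiHopThroughput n E Bs r) (Set.Ioi 0) ∧
    (∀ C : Set ℝ, C = {t : ℝ | 0 < t ∧ MultiHopThroughput n E Bs r t = B₀} →
      C.Nonempty →
      MultiHopThroughput n E Bs r (sInf C) = B₀ ∧
      sInf C = sInf {T : ℝ | 0 < T ∧ B₀ ≤ MultiHopThroughput n E Bs r T} ∧
      (∀ T : ℝ, 0 < T → ∀ p : ℕ → ℝ → ℝ, MultiHopFeasible n T E Bs r p →
        B₀ ≤ (∫ t in (0:ℝ)..T, r n (p n t)) → sInf C ≤ T)) := by
  set D := MultiHopThroughput n E Bs r with hD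
  have hmono : ∀ T₁ T₂ : ℝ, 0 < T₁ → T₁ ≤ T₂ → D T₁ ≤ D T₂ :=
    fun T₁ T₂ h1 h12 => D_mono_s8 hE_nonneg hE_mono hEn_bdd hBs_nonneg hBs_mono hr h1 h12
  have hcont : ContinuousOn D (Set.Ioi 0) :=
    D_cont hE_nonneg hE_mono hEn_bdd hBs_nonneg hBs_mono hr hrn_sublinear
  refine ⟨hmono, hcont, ?_⟩
  intro C hC hCne
  obtain ⟨δ, hδpos, hδ⟩ := D_small hE_nonneg hEn_bdd hBs_nonneg hr hrn_sublinear hB₀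
  have hlb : ∀ t ∈ C, δ ≤ t := by
    intro t ht
    rw [hC] at ht
    by_contra hcon
    push_neg at hcon
    exact absurd ht.2 (ne_of_lt (hδ t ht.1 hcon))
  have hbdd : BddBelow C := ⟨δ, hlb⟩
  have hInfpos : 0 < sInf C := lt_of_lt_of_le hδpos (le_csInf hCne hlb)
  have hclosure : sInf C ∈ closure C := csInf_mem_closure hCne hbdd
  have hcontAt : ContinuousAt D (sInf C) :=
    hcont.continuousAt (Ioi_mem_nhds hInfpos)
  have hDinf : D (sInf C) = B₀ := by
    have h1 : D (sInf C) ∈ closure (D '' C) :=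
      hcontAt.continuousWithinAt.mem_closure_image hclosure
    have h2 : D '' C ⊆ {B₀} := by
      rintro _ ⟨t, ht, rfl⟩
      rw [hC] at ht
      exact ht.2
    have h3 := closure_mono h2 h1
    rwa [closure_singleton, mem_singleton_iff] at h3
  have hCmem : ∀ t ∈ C, 0 < t ∧ D t = B₀ := fun t ht => by rwa [hC] at ht
  set S : Set ℝ := {T : ℝ | 0 < T ∧ B₀ ≤ D T} with hS
  have hSne : S.Nonempty := ⟨sInf C, hInfpos, hDinf.ge⟩
  have hSlb : BddBelow S := ⟨0, fun T hT => hT.1.le⟩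
  have hCS : C ⊆ S := fun t ht => ⟨(hCmem t ht).1, (hCmem t ht).2.ge⟩
  have heq : sInf C = sInf S := by
    refine le_antisymm (le_csInf hSne ?_) (csInf_le_csInf hSlb hCne hCS)
    intro T hT
    by_contra hcon
    push_neg at hcon
    have hTC : T ∈ C := by
      rw [hC]
      refine ⟨hT.1, le_antisymm ((hmono T (sInf C) hT.1 hcon.le).trans_eq hDinf) hT.2⟩
    exact absurd (csInf_le hbdd hTC) (not_le.mpr hcon)
  refine ⟨hDinf, heq, ?_⟩
  intro T hT p hp hB
  have hxmem : (∫ t in (0:ℝ)..T, r n (p n t)) ∈ FSet n E Bs r T := ⟨p, hp, rfl⟩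
  have hDT : B₀ ≤ D T :=
    hB.trans (le_csSup (bddAbove_FSet hr hEn_bdd hT) hxmem)
  rw [heq]
  exact csInf_le hSlb ⟨hT, hDT⟩
end
end
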